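/- For a pointed topological space (X, x₀), the topology of π₁^τ(X, x₀) is the finest group topology on the fundamental group π₁(X, x₀) such that the canonical map h : Ω(X, x₀) → π₁(X, x₀) sending a loop to its homotopy class is continuous. That is, if π₁(X, x₀) is given any topology making it a topological group such that h is continuous, then the identity map π₁^τ(X, x₀) → π₁(X, x₀) is continuous. -/

import Mathlib

attribute [local instance] Path.Homotopic.setoid

/-- The canonical map `h : Ω(X,x₀) → π₁(X,x₀)` sending a loop to its homotopy class. -/
noncomputable def loopClassMap (X : TopCat) (x₀ : X) : Path x₀ x₀ → FundamentalGroup X x₀ :=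
  fun γ => FundamentalGroup.fromPath ⟦γ⟧

/-- The quasitopological (quotient) topology on `π₁(X,x₀)` induced by `h`. -/
noncomputable def qtopTopology (X : TopCat) (x₀ : X) :
    TopologicalSpace (FundamentalGroup X x₀) :=
  TopologicalSpace.coinduced (loopClassMap X x₀) inferInstance

/-- The topology of `π₁^τ(X,x₀)`: the quotient topology with respect to the
multiplication-of-letters map from the free Markov topological group on `π₁^{qtop}(X,x₀)`. -/
noncomputable def tauPiTopology (X : TopCat) (x₀ : X) :
    TopologicalSpace (FundamentalGroup X x₀) :=
  TopologicalSpace.coinduced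
    (⇑(FreeGroup.lift (id : FundamentalGroup X x₀ → FundamentalGroup X x₀) :
        FreeGroup (FundamentalGroup X x₀) →* FundamentalGroup X x₀))
    (@GroupTopology.coinduced (FundamentalGroup X x₀) (FreeGroup (FundamentalGroup X x₀))
      (qtopTopology X x₀) _ FreeGroup.of).toTopologicalSpace

/-- `π₁^τ(X,x₀)` carries the finest group topology making `h : Ω(X,x₀) → π₁(X,x₀)` continuous:
for any group topology `t` on `π₁(X,x₀)` for which `h` is continuous, the identity
`π₁^τ(X,x₀) → (π₁(X,x₀), t)` is continuous. -/
theorem tauPiTopology_finest (X : TopCat) (x₀ : X)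
    (t : GroupTopology (FundamentalGroup X x₀))
    (ht : @Continuous _ _ _ t.toTopologicalSpace (loopClassMap X x₀)) :
    tauPiTopology X x₀ ≤ t.toTopologicalSpace := by
  set G := FundamentalGroup X x₀
  set φ : FreeGroup G →* G := FreeGroup.lift (id : G → G)
  -- the group topology on FreeGroup G induced from t along φ
  letI tt : TopologicalSpace G := t.toTopologicalSpace
  haveI : IsTopologicalGroup G := t.toIsTopologicalGroup
  let b : GroupTopology (FreeGroup G) :=
    { toTopologicalSpace := TopologicalSpace.induced ⇑φ tt
      toIsTopologicalGroup := topologicalGroup_induced φ }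
  -- qtop ≤ t
  have hq : qtopTopology X x₀ ≤ tt := by
    rw [qtopTopology, coinduced_le_iff_le_induced,
      ← continuous_iff_le_induced]
    exact ht
  -- FreeGroup.of is continuous from qtop to b
  have hb : TopologicalSpace.coinduced FreeGroup.of (qtopTopology X x₀) ≤
      b.toTopologicalSpace := by
    rw [coinduced_le_iff_le_induced]
    show qtopTopology X x₀ ≤ TopologicalSpace.induced FreeGroup.of
      (TopologicalSpace.induced ⇑φ tt)
    rw [induced_compose]
    have hc : (⇑φ ∘ FreeGroup.of : G → G) = id := by
      funext g; simp [φ]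
    rw [hc, induced_id]
    exact hq
  have hle : (@GroupTopology.coinduced G (FreeGroup G)
      (qtopTopology X x₀) _ FreeGroup.of).toTopologicalSpace ≤ b.toTopologicalSpace :=
    GroupTopology.toTopologicalSpace_le.mpr (sInf_le hb)
  rw [tauPiTopology, coinduced_le_iff_le_induced]
  exact le_trans hle le_rfl
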